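/- Let k ≥ 2, ℓ ≥ 1, and let f be a unary partial function on **k**. If every subfunction g ≤ f with |dom(g)| = ℓ belongs to Ω_{<ℓ}(k), then f ∈ Ω_{<ℓ}(k). -/

import Mathlib

/-- A unary partial function on `Fin k`: a domain together with a value map
(values outside the domain are irrelevant). -/
structure PFun1 (k : ℕ) where
  Dom : Set (Fin k)
  toFun : Fin k → Fin k

/-- A unary partial function `f` preserves the `h`-ary relation `ρ` if whenever a
tuple of `ρ` has all its entries in the domain of `f`, the image tuple is in `ρ`. -/
def Preserves1 {k h : ℕ} (f : PFun1 k) (ρ : Set (Fin h → Fin k)) : Prop :=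
  ∀ M : Fin h → Fin k, M ∈ ρ → (∀ i, M i ∈ f.Dom) → (fun i => f.toFun (M i)) ∈ ρ

/-- `pPol^{(1)}(ρ)`: the set of unary partial functions preserving `ρ`. -/
def pPol1 {k : ℕ} (h : ℕ) (ρ : Set (Fin h → Fin k)) : Set (PFun1 k) :=
  { f | Preserves1 f ρ }

/-- `Ω_{<ℓ}(k)`: unary partial functions that are restrictions of the identity
or whose image has fewer than `ℓ` elements. -/
def Omega (k ℓ : ℕ) : Set (PFun1 k) :=
  { f | (∀ x ∈ f.Dom, f.toFun x = x) ∨ (f.toFun '' f.Dom).ncard < ℓ }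

/-- `Ψ_ℓ(k)`: unary partial functions with domain of size `ℓ` not in `Ω_{<ℓ}(k)`. -/
def Psi (k ℓ : ℕ) : Set (PFun1 k) :=
  { f | f.Dom.ncard = ℓ ∧ f ∉ Omega k ℓ }

/-- `g` is a subfunction of `f`. -/
def Sub1 {k : ℕ} (g f : PFun1 k) : Prop :=
  g.Dom ⊆ f.Dom ∧ ∀ x ∈ g.Dom, g.toFun x = f.toFun x

/-- `ρ` is hereditarily `ℓ`-rigid: `pPol^{(1)}(ρ) = Ω_{<ℓ}(k)`. -/
def HereditarilyRigid {k : ℕ} (h : ℕ) (ℓ : ℕ) (ρ : Set (Fin h → Fin k)) : Prop :=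
  pPol1 h ρ = Omega k ℓ

/-- `T_ρ^ℓ(x)`: the set of surjective `i : [h] → [ℓ]` with `x ∘ i ∈ ρ`. -/
def Tset {k h : ℕ} (ℓ : ℕ) (ρ : Set (Fin h → Fin k)) (x : Fin ℓ → Fin k) :
    Set (Fin h → Fin ℓ) :=
  { i | Function.Surjective i ∧ x ∘ i ∈ ρ }

/-- `s(h, ℓ)`: the number of surjections from an `h`-element set onto an `ℓ`-element set. -/
noncomputable def numSurj (h ℓ : ℕ) : ℕ := Nat.card { i : Fin h → Fin ℓ // Function.Surjective i }

/-- If every subfunction of `f` with domain of size `ℓ` belongs to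
`Ω_{<ℓ}(k)`, then so does `f`. -/
theorem mem_Omega_of_subfunctions (k ℓ : ℕ) (hk : 2 ≤ k) (hℓ : 1 ≤ ℓ) (f : PFun1 k)
    (H : ∀ g : PFun1 k, Sub1 g f → g.Dom.ncard = ℓ → g ∈ Omega k ℓ) :
    f ∈ Omega k ℓ := by
  by_contra hf
  simp only [Omega, Set.mem_setOf_eq, not_or, not_lt] at hf
  obtain ⟨hid, hcard⟩ := hf
  push_neg at hid
  obtain ⟨x, hx, hxne⟩ := hid
  set V := f.toFun '' f.Dom with hV
  have hVfin : V.Finite := Set.toFinite _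
  have hfxV : f.toFun x ∈ V := ⟨x, hx, rfl⟩
  have hdiff : ℓ - 1 ≤ (V \ {f.toFun x}).ncard := by
    rw [Set.ncard_diff_singleton_of_mem hfxV]
    omega
  obtain ⟨T', hT'sub, hT'card⟩ := Set.exists_subset_card_eq hdiff
  have hfxT' : f.toFun x ∉ T' := fun h => (hT'sub h).2 rfl
  set T := insert (f.toFun x) T' with hT
  have hTfin : T.Finite := Set.toFinite _
  have hTcard : T.ncard = ℓ := by
    rw [hT, Set.ncard_insert_of_notMem hfxT' (Set.Finite.subset hVfin (hT'sub.trans Set.diff_subset)), hT'card]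
    omega
  have hTsub : T ⊆ V := by
    rw [hT]
    exact Set.insert_subset hfxV (hT'sub.trans Set.diff_subset)
  classical
  set p : Fin k → Fin k := fun v =>
    if v = f.toFun x then x
    else if hv : ∃ a ∈ f.Dom, f.toFun a = v then hv.choose else x with hp
  have hpspec : ∀ v ∈ T, p v ∈ f.Dom ∧ f.toFun (p v) = v := by
    intro v hv
    by_cases h1 : v = f.toFun x
    · simp [hp, h1, hx]
    · have hex : ∃ a ∈ f.Dom, f.toFun a = v := by
        obtain ⟨a, ha, rfl⟩ := hTsub hv
        exact ⟨a, ha, rfl⟩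
      simp only [hp, h1, if_false, dif_pos hex]
      exact ⟨hex.choose_spec.1, hex.choose_spec.2⟩
  set S := p '' T with hS
  have hSsub : S ⊆ f.Dom := by
    rintro _ ⟨v, hv, rfl⟩
    exact (hpspec v hv).1
  have himg : f.toFun '' S = T := by
    apply Set.Subset.antisymm
    · rintro _ ⟨_, ⟨v, hv, rfl⟩, rfl⟩
      rw [(hpspec v hv).2]; exact hv
    · intro v hv
      exact ⟨p v, ⟨v, hv, rfl⟩, (hpspec v hv).2⟩
  have hinj : Set.InjOn p T := by
    intro a ha b hb hab
    rw [← (hpspec a ha).2, ← (hpspec b hb).2, hab]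
  have hScard : S.ncard = ℓ := by
    rw [hS, Set.ncard_image_of_injOn hinj, hTcard]
  have hxS : x ∈ S := by
    refine ⟨f.toFun x, Set.mem_insert _ _, ?_⟩
    simp [hp]
  set g : PFun1 k := ⟨S, f.toFun⟩ with hg
  have hgO := H g ⟨hSsub, fun _ _ => rfl⟩ hScard
  rcases hgO with h1 | h2
  · exact hxne (h1 x hxS)
  · rw [show g.toFun '' g.Dom = T from himg, hTcard] at h2
    omega
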